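/- In the group G = ⟨a, b | a²b⁻²ab⁻²a²ba²baba²b = 1⟩ with μ = b⁻²ab⁻²ab⁻¹, the identity μ⁻¹ = b a b a² b a b a² b a² holds. -/

import Mathlib

/-- The relator `a²b⁻²ab⁻²a²ba²baba²b` in the free group on two generators. -/
def v2503Rel : FreeGroup (Fin 2) :=
  let a : FreeGroup (Fin 2) := FreeGroup.of 0
  let b : FreeGroup (Fin 2) := FreeGroup.of 1
  a ^ 2 * b⁻¹ ^ 2 * a * b⁻¹ ^ 2 * a ^ 2 * b * a ^ 2 * b * a * b * a ^ 2 * b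

/-- The fundamental group of v2503: `⟨a, b | a²b⁻²ab⁻²a²ba²baba²b = 1⟩`. -/
abbrev V2503 : Type := PresentedGroup ({v2503Rel} : Set (FreeGroup (Fin 2)))

/-- The generator `a`. -/
def va : V2503 := PresentedGroup.of 0

/-- The generator `b`. -/
def vb : V2503 := PresentedGroup.of 1

/-- The meridian `μ = b⁻²ab⁻²ab⁻¹`. -/
def vmu : V2503 := vb⁻¹ ^ 2 * va * vb⁻¹ ^ 2 * va * vb⁻¹

/-- The longitude `λ = a⁻²b⁻¹a⁻²b`. -/
def vlam : V2503 := va⁻¹ ^ 2 * vb⁻¹ * va⁻¹ ^ 2 * vb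

/-- in `π₁(v2503)`, `μ⁻¹ = b a b a² b a b a² b a²`. -/
theorem v2503_mu_inv :
    vmu⁻¹ = vb * va * vb * va ^ 2 * vb * va * vb * va ^ 2 * vb * va ^ 2 := by
  have hrel : va ^ 2 * vb⁻¹ ^ 2 * va * vb⁻¹ ^ 2 * va ^ 2 * vb * va ^ 2 * vb * va * vb
      * va ^ 2 * vb = 1 := by
    have h1 : (QuotientGroup.mk v2503Rel : V2503) = 1 := by
      rw [QuotientGroup.eq_one_iff]
      exact Subgroup.subset_normalClosure rfl
    exact PresentedGroup.one_of_mem (rels := ({v2503Rel} : Set (FreeGroup (Fin 2)))) rfl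
  apply inv_eq_of_mul_eq_one_right
  calc vmu * (vb * va * vb * va ^ 2 * vb * va * vb * va ^ 2 * vb * va ^ 2)
      = va⁻¹ ^ 2 * (va ^ 2 * vb⁻¹ ^ 2 * va * vb⁻¹ ^ 2 * va ^ 2 * vb * va ^ 2 * vb * va * vb
        * va ^ 2 * vb) * va ^ 2 := by
        unfold vmu; group; simp only [pow_two, zpow_two, mul_assoc]
    _ = 1 := by rw [hrel]; group
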